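/- arXiv:2003.00687 — 9 statements merged into one kernel-verified Lean document; each statement's English description precedes it below -/
import Mathlib

section
/- Let λ : ℚ × ℚ → ℂ be square-summable and suppose: (i) λ(x,y) = λ(-x,y) for all x, y ∈ ℚ; (ii) λ(0,b) = 0 for all b ∈ ℚ; (iii) for all a, x, y, b ∈ ℚ with a > 0 one has: if b·x = 0 then λ(x,y)·λ(a,b) = λ(x/a, y)·λ(a,b); if b·x ≠ 0 and 2a + b·x = 0 then λ(x,y)·λ(a,b) = λ(2/b, y - 4/b)·λ(a,-b); and if b·x ≠ 0 and 2a + b·x ≠ 0 then λ(x,y)·λ(a,b) = 0. Then λ(x,y) = 0 for every pair (x,y) ∈ ℚ × ℚ other than (1,0) and (-1,0). -/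
/-- Solution of the coefficient system for `E(u_{e₁} + u_{-e₁})` in the
`PSL₂(ℚ)` case: the only possibly nonzero coefficients are at `(1,0)` and `(-1,0)`. -/
theorem stmt_0 (lam : ℚ × ℚ → ℂ)
    (hsum : Summable fun p : ℚ × ℚ => ‖lam p‖ ^ 2)
    (hsym : ∀ x y : ℚ, lam (x, y) = lam (-x, y))
    (hzero : ∀ b : ℚ, lam (0, b) = 0)
    (heq1 : ∀ a x y b : ℚ, 0 < a → b * x = 0 →
      lam (x, y) * lam (a, b) = lam (x / a, y) * lam (a, b))
    (heq2 : ∀ a x y b : ℚ, 0 < a → b * x ≠ 0 → 2 * a + b * x = 0 →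
      lam (x, y) * lam (a, b) = lam (2 / b, y - 4 / b) * lam (a, -b))
    (heq3 : ∀ a x y b : ℚ, 0 < a → b * x ≠ 0 → 2 * a + b * x ≠ 0 →
      lam (x, y) * lam (a, b) = 0) :
    ∀ x y : ℚ, (x, y) ≠ ((1 : ℚ), (0 : ℚ)) → (x, y) ≠ ((-1 : ℚ), (0 : ℚ)) →
      lam (x, y) = 0 := by
  -- Step 1: lam (a, b) = 0 whenever 0 < a and b ≠ 0.
  have key1 : ∀ a b : ℚ, 0 < a → b ≠ 0 → lam (a, b) = 0 := by
    intro a b ha hb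
    by_contra hne
    -- first show b = -2
    have hb2 : b = -2 := by
      by_contra hb2
      have hba : b * a ≠ 0 := mul_ne_zero hb ha.ne'
      have hsum0 : 2 * a + b * a ≠ 0 := by
        intro h
        apply hb2
        have h' : a * (b + 2) = 0 := by ring_nf; linarith
        rcases mul_eq_zero.mp h' with h'' | h''
        · exact absurd h'' ha.ne'
        · linarith
      have h3 := heq3 a a b b ha hba hsum0
      exact hne (mul_self_eq_zero.mp h3)
    subst hb2
    -- lam (a, 2) = 0
    have ha2 : lam (a, 2) = 0 := by
      have h3 := heq3 a a 2 2 ha (mul_ne_zero two_ne_zero ha.ne')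
        (by intro h; nlinarith)
      exact mul_self_eq_zero.mp h3
    have h2 := heq2 a a (-2) (-2) ha (by
        intro h
        rcases mul_eq_zero.mp h with h' | h'
        · norm_num at h'
        · exact ha.ne' h') (by ring)
    norm_num at h2
    rw [ha2, mul_zero] at h2
    exact hne (mul_self_eq_zero.mp h2)
  -- Step 1': lam (a, b) = 0 whenever b ≠ 0.
  have key1' : ∀ a b : ℚ, b ≠ 0 → lam (a, b) = 0 := by
    intro a b hb
    rcases lt_trichotomy a 0 with h | h | h
    · rw [hsym]; exact key1 (-a) b (by linarith) hb
    · rw [h]; exact hzero b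
    · exact key1 a b h hb
  -- Step 2: lam (d, 0) = 0 whenever 1 < d.
  have key2 : ∀ d : ℚ, 1 < d → lam (d, 0) = 0 := by
    intro d hd
    by_contra hne
    have hd0 : (0 : ℚ) < d := by linarith
    have h1 : ∀ x : ℚ, lam (x, 0) = lam (x / d, 0) :=
      fun x => mul_right_cancel₀ hne (heq1 d x 0 0 hd0 (by ring))
    have hpow : ∀ n : ℕ, lam (d ^ (n + 1), 0) = lam (d, 0) := by
      intro n
      induction n with
      | zero => rw [pow_one]
      | succ k ih =>
        rw [h1 (d ^ (k + 1 + 1))]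
        rw [pow_succ, mul_div_cancel_right₀ _ hd0.ne']
        exact ih
    have hinj : Function.Injective (fun n : ℕ => ((d ^ (n + 1) : ℚ), (0 : ℚ))) := by
      intro m n h
      simp only [Prod.mk.injEq] at h
      have hmono : StrictMono (fun n : ℕ => d ^ n) := fun i j hij =>
        pow_lt_pow_right₀ hd hij
      have := hmono.injective h.1
      omega
    have hs : Summable fun n : ℕ => ‖lam (d ^ (n + 1), (0 : ℚ))‖ ^ 2 :=
      hsum.comp_injective hinj
    simp only [hpow] at hs
    have ht := hs.tendsto_atTop_zero
    have h0 : ‖lam (d, (0 : ℚ))‖ ^ 2 = 0 :=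
      tendsto_nhds_unique tendsto_const_nhds ht
    have : lam (d, (0 : ℚ)) = 0 := by
      have := pow_eq_zero_iff (n := 2) (by norm_num) |>.mp h0
      simpa using this
    exact hne this
  -- Step 3: lam (c, 0) = 0 whenever 0 < c and c ≠ 1.
  have key3 : ∀ c : ℚ, 0 < c → c ≠ 1 → lam (c, 0) = 0 := by
    intro c hc hc1
    rcases lt_or_gt_of_ne hc1 with h | h
    · by_contra hne
      have h1 : ∀ x : ℚ, lam (x, 0) = lam (x / c, 0) :=
        fun x => mul_right_cancel₀ hne (heq1 c x 0 0 hc (by ring))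
      have e1 : lam (c, 0) = lam (1, 0) := by
        have := h1 c; rwa [div_self hc.ne'] at this
      have e2 : lam (1, 0) = lam (1 / c, 0) := h1 1
      have hinv : (1 : ℚ) < 1 / c := one_lt_one_div hc h
      have := key2 (1 / c) hinv
      rw [← e2, ← e1] at this
      exact hne this
    · exact key2 c h
  -- Conclusion
  intro x y hne1 hne2
  by_cases hy : y = 0
  · subst hy
    rcases lt_trichotomy x 0 with h | h | h
    · rw [hsym]
      refine key3 (-x) (by linarith) ?_
      intro hx1
      exact hne2 (by rw [Prod.mk.injEq]; constructor <;> [linarith; rfl])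
    · rw [h]; exact hzero 0
    · refine key3 x h ?_
      intro hx1
      exact hne1 (by rw [Prod.mk.injEq]; exact ⟨hx1, rfl⟩)
  · exact key1' x y hy
end

section
/- Let λ, μ : ℚ × ℚ → ℂ be square-summable functions satisfying: (i) λ(-1,b) = 0 and μ(-1,b) = 0 for all b ∈ ℚ; (ii) λ(x,y) = λ(-2-x, y) and μ(x,y) = μ(-2-x, y) for all x, y ∈ ℚ; (iii) λ(x,y) + μ(x,-y) = 0 for all x ∈ ℚ and all y ≠ 0, and λ(x,0) + μ(x,0) = 0 for all x ∉ {0, -2}; (iv) for all s, a, y ∈ ℚ with a ≠ -1 and s ≠ 0: λ(s-1-(a+1)y, y)·λ(a,0) + μ(s-1-(a+1)y, -y)·μ(-2-a, 0) = λ(s/(a+1)-y-1, y)·λ(a,0) + μ(-a-2, 0)·μ(y-1-s/(a+1), -y), and also λ(s-1-(a+1)y, -y)·μ(-2-a, 0) + μ(s-1-(a+1)y, y)·λ(a,0) = λ(y-s/(a+1)-1, -y)·μ(-a-2, 0) + μ(s/(a+1)-1-y, y)·λ(a,0); (v) for all s, a, b, y ∈ ℚ with a ≠ -1, b ≠ 0,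 s ≠ 0, y ≠ s/(a+1) and y ≠ s/(a+1) + 2/b: λ(s-1-(a+1)y, y)·λ(a,b) + μ(s-1-(a+1)y, -y)·μ(-2-a, -b) = 0; (vi) for all s, a, b, y ∈ ℚ with a ≠ -1, b ≠ 0, s ≠ 0, y ≠ s/(a+1) and y ≠ s/(a+1) - 2/b: λ(s-1-(a+1)y, -y)·μ(-2-a, -b) + μ(s-1-(a+1)y, y)·λ(a,b) = 0. Then λ(x,y) = 0 and μ(x,y) = 0 for every pair (x,y) ∈ ℚ × ℚ other than (0,0) and (-2,0). -/
/-- Solution of the coefficient system for `c_{e₁}` in the `SL₂(ℚ)` case: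
the only possibly nonzero coefficients are at `(0,0)` and `(-2,0)`. -/
theorem stmt_1 (lam mu : ℚ × ℚ → ℂ)
    (hsuml : Summable fun p : ℚ × ℚ => ‖lam p‖ ^ 2)
    (hsumm : Summable fun p : ℚ × ℚ => ‖mu p‖ ^ 2)
    (h1l : ∀ b : ℚ, lam (-1, b) = 0)
    (h1m : ∀ b : ℚ, mu (-1, b) = 0)
    (h2l : ∀ x y : ℚ, lam (x, y) = lam (-2 - x, y))
    (h2m : ∀ x y : ℚ, mu (x, y) = mu (-2 - x, y))
    (h3 : ∀ x y : ℚ, y ≠ 0 → lam (x, y) + mu (x, -y) = 0)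
    (h3' : ∀ x : ℚ, x ≠ 0 → x ≠ -2 → lam (x, 0) + mu (x, 0) = 0)
    (h4 : ∀ s a y : ℚ, a ≠ -1 → s ≠ 0 →
      lam (s - 1 - (a + 1) * y, y) * lam (a, 0)
        + mu (s - 1 - (a + 1) * y, -y) * mu (-2 - a, 0)
      = lam (s / (a + 1) - y - 1, y) * lam (a, 0)
        + mu (-a - 2, 0) * mu (y - 1 - s / (a + 1), -y))
    (h4' : ∀ s a y : ℚ, a ≠ -1 → s ≠ 0 →
      lam (s - 1 - (a + 1) * y, -y) * mu (-2 - a, 0)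
        + mu (s - 1 - (a + 1) * y, y) * lam (a, 0)
      = lam (y - s / (a + 1) - 1, -y) * mu (-a - 2, 0)
        + mu (s / (a + 1) - 1 - y, y) * lam (a, 0))
    (h5 : ∀ s a b y : ℚ, a ≠ -1 → b ≠ 0 → s ≠ 0 →
      y ≠ s / (a + 1) → y ≠ s / (a + 1) + 2 / b →
      lam (s - 1 - (a + 1) * y, y) * lam (a, b)
        + mu (s - 1 - (a + 1) * y, -y) * mu (-2 - a, -b) = 0)
    (h6 : ∀ s a b y : ℚ, a ≠ -1 → b ≠ 0 → s ≠ 0 →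
      y ≠ s / (a + 1) → y ≠ s / (a + 1) - 2 / b →
      lam (s - 1 - (a + 1) * y, -y) * mu (-2 - a, -b)
        + mu (s - 1 - (a + 1) * y, y) * lam (a, b) = 0) :
    ∀ x y : ℚ, (x, y) ≠ ((0 : ℚ), (0 : ℚ)) → (x, y) ≠ ((-2 : ℚ), (0 : ℚ)) →
      lam (x, y) = 0 ∧ mu (x, y) = 0 := by
  -- Step 1 : lam (x, y) = 0 whenever y ≠ 0.
  have step1 : ∀ x y : ℚ, y ≠ 0 → lam (x, y) = 0 := by
    intro x y hy
    by_cases hx1 : x = -1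
    · rw [hx1]; exact h1l y
    have hx1' : x + 1 ≠ 0 := fun h => hx1 (by linarith)
    -- rewrites of the mu's in terms of lam (x, y)
    have hmu1 : mu (x, -y) = -lam (x, y) := by
      have := h3 x y hy; linear_combination this
    have hmu2 : mu (-2 - x, -y) = -lam (x, y) := by
      rw [← h2m x (-y)]; exact hmu1
    by_cases hy12 : y = -1 ∨ y = -2
    -- use h6 with s = (x+1)*(1-y), and the y of h6 equal to -y
    · have hyne1 : y ≠ 1 := by rcases hy12 with h | h <;> rw [h] <;> norm_num
      have hyne2 : y ≠ 2 := by rcases hy12 with h | h <;> rw [h] <;> norm_num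
      have hs : (x + 1) * (1 - y) ≠ 0 :=
        mul_ne_zero hx1' (fun h => hyne1 (by linarith))
      have hdiv : (x + 1) * (1 - y) / (x + 1) = 1 - y := by
        field_simp
      have hkey := h6 ((x + 1) * (1 - y)) x y (-y) hx1 hy hs
        (by rw [hdiv]; intro h; exact hy (by linarith))
        (by
          rw [hdiv]
          intro h
          have h2y : (2 : ℚ) / y = 1 := by linarith
          have : (2 : ℚ) = y := by
            field_simp at h2y; linarith
          exact hyne2 this.symm)
      have harg : (x + 1) * (1 - y) - 1 - (x + 1) * (-y) = x := by ring
      rw [harg, neg_neg, hmu2, hmu1] at hkey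
      have : lam (x, y) * lam (x, y) = 0 := by linear_combination (-1/2 : ℂ) * hkey
      exact mul_self_eq_zero.mp this
    -- use h5 with s = (x+1)*(1+y)
    · push_neg at hy12
      obtain ⟨hyne1, hyne2⟩ := hy12
      have hs : (x + 1) * (1 + y) ≠ 0 :=
        mul_ne_zero hx1' (fun h => hyne1 (by linarith))
      have hdiv : (x + 1) * (1 + y) / (x + 1) = 1 + y := by
        field_simp
      have hkey := h5 ((x + 1) * (1 + y)) x y y hx1 hy hs
        (by rw [hdiv]; intro h; exact hy (by linarith))
        (by
          rw [hdiv]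
          intro h
          have h2y : (2 : ℚ) / y = -1 := by linarith
          have : (2 : ℚ) = -y := by
            field_simp at h2y; linarith
          exact hyne2 (by linarith))
      have harg : (x + 1) * (1 + y) - 1 - (x + 1) * y = x := by ring
      rw [harg, hmu1, hmu2] at hkey
      have : lam (x, y) * lam (x, y) = 0 := by linear_combination (1/2 : ℂ) * hkey
      exact mul_self_eq_zero.mp this
  -- Step 2 : mu (x, y) = 0 whenever y ≠ 0.
  have step2 : ∀ x y : ℚ, y ≠ 0 → mu (x, y) = 0 := by
    intro x y hy
    have h := h3 x (-y) (neg_ne_zero.mpr hy)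
    rw [neg_neg, step1 x (-y) (neg_ne_zero.mpr hy)] at h
    linear_combination h
  -- Step 3 : mu (c, 0) = 0 whenever c ∉ {0, -1, -2}.
  have step3 : ∀ c : ℚ, c ≠ 0 → c ≠ -1 → c ≠ -2 → mu (c, 0) = 0 := by
    intro c hc0 hc1 hc2
    by_contra hM
    set q : ℚ := c + 1 with hq
    have hq0 : q ≠ 0 := fun h => hc1 (by simp [hq] at h; linarith)
    have hq1 : q ≠ 1 := fun h => hc0 (by simp [hq] at h; linarith)
    have hqm1 : q ≠ -1 := fun h => hc2 (by simp [hq] at h; linarith)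
    have habs0 : (0 : ℚ) < |q| := abs_pos.mpr hq0
    have habs1 : |q| ≠ 1 := by
      intro h
      rcases abs_eq (le_of_lt one_pos) |>.mp h with h' | h'
      exacts [hq1 h', hqm1 h']
    -- powers of q avoid 1 and -1
    have hpow : ∀ m : ℕ, m ≠ 0 → |q| ^ m ≠ 1 := by
      intro m hm
      rcases lt_or_gt_of_ne habs1 with h | h
      · exact ne_of_lt (pow_lt_one₀ (le_of_lt habs0) h hm)
      · exact ne_of_gt (one_lt_pow₀ h hm)
    have hpow1 : ∀ n : ℕ, q ^ (n + 2) ≠ 1 := by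
      intro n h
      apply hpow (n + 2) (by omega)
      rw [← abs_pow, h, abs_one]
    have hpowm1 : ∀ n : ℕ, q ^ (n + 2) ≠ -1 := by
      intro n h
      apply hpow (n + 2) (by omega)
      rw [← abs_pow, h]; norm_num
    have hlamc : lam (c, 0) = -mu (c, 0) := by
      have := h3' c hc0 hc2; linear_combination this
    -- The recurrence G(s-1) = G(s/q - 1), where G x = mu(x,0) - lam(x,0)
    have hrec : ∀ s : ℚ, s ≠ 0 →
        mu (s - 1, 0) - lam (s - 1, 0) = mu (s / q - 1, 0) - lam (s / q - 1, 0) := by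
      intro s hs
      have hkey := h4 s c 0 hc1 hs
      have e1 : s - 1 - (c + 1) * 0 = s - 1 := by ring
      have e2 : (0 : ℚ) - 1 - s / (c + 1) = -2 - (s / (c + 1) - 1) := by ring
      have e3 : s / (c + 1) - 0 - 1 = s / (c + 1) - 1 := by ring
      have e4 : -c - 2 = -2 - c := by ring
      rw [e1, e2, e3, e4, neg_zero, ← h2m (s / (c + 1) - 1) 0, ← h2m c 0, hlamc] at hkey
      have : s / (c + 1) = s / q := by rw [hq]
      rw [this] at hkey
      have hMne : mu (c, 0) ≠ 0 := hM
      apply mul_left_cancel₀ hMne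
      linear_combination hkey
    -- iterate the recurrence
    have iter : ∀ n : ℕ, mu (q ^ (n + 2) - 1, 0) - lam (q ^ (n + 2) - 1, 0)
        = mu (c, 0) - lam (c, 0) := by
      intro n
      induction n with
      | zero =>
        have h := hrec (q ^ 2) (pow_ne_zero 2 hq0)
        have hd : q ^ 2 / q = q := by
          field_simp [pow_two]
        rw [hd] at h
        have : q - 1 = c := by rw [hq]; ring
        rw [this] at h
        exact h
      | succ n ih =>
        have h := hrec (q ^ (n + 3)) (pow_ne_zero _ hq0)
        have hd : q ^ (n + 3) / q = q ^ (n + 2) := by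
          rw [pow_succ]
          field_simp
        rw [hd] at h
        have e : n + 1 + 2 = n + 3 := by omega
        rw [e, h, ih]
    -- hence mu is the same nonzero constant at infinitely many points
    have hval : ∀ n : ℕ, mu (q ^ (n + 2) - 1, 0) = mu (c, 0) := by
      intro n
      have hx0 : q ^ (n + 2) - 1 ≠ 0 := fun h => hpow1 n (by linarith)
      have hx2 : q ^ (n + 2) - 1 ≠ -2 := fun h => hpowm1 n (by linarith)
      have hl : lam (q ^ (n + 2) - 1, 0) = -mu (q ^ (n + 2) - 1, 0) := by
        have := h3' _ hx0 hx2; linear_combination this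
      have h := iter n
      rw [hl, hlamc] at h
      linear_combination (1/2 : ℂ) * h
    -- injectivity of n ↦ (q^(n+2) - 1, 0)
    have hinj : Function.Injective (fun n : ℕ => ((q ^ (n + 2) - 1 : ℚ), (0 : ℚ))) := by
      intro m n h
      simp only [Prod.mk.injEq] at h
      have h' : q ^ (m + 2) = q ^ (n + 2) := by linarith [h.1]
      have habs : |q| ^ (m + 2) = |q| ^ (n + 2) := by
        rw [← abs_pow, ← abs_pow, h']
      have := pow_right_injective₀ habs0 habs1 habs
      omega
    -- contradiction with summability
    have hsum := hsumm.comp_injective hinj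
    have hsum' : Summable (fun _ : ℕ => ‖mu (c, 0)‖ ^ 2) := by
      refine hsum.congr fun n => ?_
      simp only [Function.comp_apply]
      rw [hval n]
    have htend := hsum'.tendsto_atTop_zero
    have : ‖mu (c, 0)‖ ^ 2 = 0 := tendsto_nhds_unique tendsto_const_nhds htend
    have : mu (c, 0) = 0 := by
      apply norm_eq_zero.mp
      nlinarith [norm_nonneg (mu (c, 0))]
    exact hM this
  -- conclusion
  intro x y hne0 hne2
  by_cases hy : y = 0
  · subst hy
    have hx0 : x ≠ 0 := fun h => hne0 (by rw [h])
    have hx2 : x ≠ -2 := fun h => hne2 (by rw [h])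
    by_cases hx1 : x = -1
    · subst hx1; exact ⟨h1l 0, h1m 0⟩
    · have hm := step3 x hx0 hx1 hx2
      have hl : lam (x, 0) = 0 := by
        have := h3' x hx0 hx2; rw [hm] at this; linear_combination this
      exact ⟨hl, hm⟩
  · exact ⟨step1 x y hy, step2 x y hy⟩
end

section
/- Let k ≥ 1 be an integer and let λ : ℤ × ℤ → ℂ satisfy: (i) λ(x,y) = λ(-x,y) for all x, y ∈ ℤ; (ii) λ(0,b) = 0 for all b ∈ ℤ; (iii) for all x, y, b ∈ ℤ and all integers a > 0: if b·x = 0 and a divides x, then λ(x,y)·λ(a,b) = λ(k·x/a, y)·λ(a,b); if b ≠ 0, b divides 2, and 2a + b·x = 0, then λ(x,y)·λ(a,b) = λ(2k/b, y - 4/b)·λ(a,-b); and in all other cases λ(x,y)·λ(a,b) = 0. Then λ(x,y) = 0 for every pair (x,y) ∈ ℤ × ℤ other than (k,0) and (-k,0). -/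
/-- Solution of the coefficient system for `E(u_{ke₁} + u_{-ke₁})` in the
`PSL₂(ℤ)` case: the only possibly nonzero coefficients are at `(k,0)` and `(-k,0)`. -/
theorem stmt_2 (k : ℤ) (hk : 1 ≤ k) (lam : ℤ × ℤ → ℂ)
    (hsym : ∀ x y : ℤ, lam (x, y) = lam (-x, y))
    (hzero : ∀ b : ℤ, lam (0, b) = 0)
    (heq1 : ∀ x y b a : ℤ, 0 < a → b * x = 0 → a ∣ x →
      lam (x, y) * lam (a, b) = lam (k * x / a, y) * lam (a, b))
    (heq2 : ∀ x y b a : ℤ, 0 < a → b ≠ 0 → b ∣ 2 → 2 * a + b * x = 0 →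
      lam (x, y) * lam (a, b) = lam (2 * k / b, y - 4 / b) * lam (a, -b))
    (heq3 : ∀ x y b a : ℤ, 0 < a → ¬(b * x = 0 ∧ a ∣ x) →
      ¬(b ≠ 0 ∧ b ∣ 2 ∧ 2 * a + b * x = 0) →
      lam (x, y) * lam (a, b) = 0) :
    ∀ x y : ℤ, (x, y) ≠ (k, (0 : ℤ)) → (x, y) ≠ (-k, (0 : ℤ)) →
      lam (x, y) = 0 := by
  have hk0 : (0 : ℤ) < k := lt_of_lt_of_le one_pos hk
  have key : ∀ x y : ℤ, 0 < x → ¬(x = k ∧ y = 0) → lam (x, y) = 0 := by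
    intro x y hx hne
    have hx0 : x ≠ 0 := hx.ne'
    by_cases hy : y = 0
    · subst hy
      have hxk : x ≠ k := fun h => hne ⟨h, rfl⟩
      have hsq : lam (x, 0) * lam (x, 0) = lam (k, 0) * lam (x, 0) := by
        have h := heq1 x 0 0 x hx (by ring) dvd_rfl
        rwa [Int.mul_ediv_cancel k hx0] at h
      by_cases hdx : k ∣ x
      · have hnd : ¬ x ∣ k := by
          intro h
          exact hxk (Int.dvd_antisymm hx.le hk0.le h hdx)
        have h0 : lam (k, 0) * lam (x, 0) = 0 := by
          refine heq3 k 0 0 x hx (fun h => hnd h.2) (fun h => h.1 rfl)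
        exact mul_self_eq_zero.mp (by rw [hsq]; exact h0)
      · have h0 : lam (x, 0) * lam (k, 0) = 0 :=
          heq3 x 0 0 k hk0 (fun h => hdx h.2) (fun h => h.1 rfl)
        exact mul_self_eq_zero.mp (by rw [hsq, mul_comm]; exact h0)
    · by_cases hy2 : y = -2
      · subst hy2
        have h2 : lam (x, 2) = 0 := by
          refine mul_self_eq_zero.mp (heq3 x 2 2 x hx ?_ ?_)
          · rintro ⟨h, -⟩
            exact hx0 (by linarith [mul_eq_zero.mp h])
          · rintro ⟨-, -, h⟩
            omega
        have h := heq2 x (-2) (-2) x hx (by norm_num) ⟨-1, by ring⟩ (by ring)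
        have hrw : lam (x, -(-2 : ℤ)) = 0 := by norm_num [h2]
        rw [hrw, mul_zero] at h
        exact mul_self_eq_zero.mp h
      · refine mul_self_eq_zero.mp (heq3 x y y x hx ?_ ?_)
        · rintro ⟨h, -⟩
          rcases mul_eq_zero.mp h with h | h
          · exact hy h
          · exact hx0 h
        · rintro ⟨-, -, h⟩
          have : x * (2 + y) = 0 := by linarith
          rcases mul_eq_zero.mp this with h' | h'
          · exact hx0 h'
          · exact hy2 (by linarith)
  intro x y h1 h2
  rcases lt_trichotomy x 0 with hx | hx | hx
  · rw [hsym]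
    refine key (-x) y (by omega) ?_
    rintro ⟨hxe, hye⟩
    exact h2 (by simp [Prod.ext_iff, hye]; omega)
  · rw [hx]; exact hzero y
  · refine key x y hx ?_
    rintro ⟨hxe, hye⟩
    exact h1 (by simp [Prod.ext_iff, hxe, hye])
end

section
/- Let ℓ ≥ 1 be an integer and let λ, μ : ℤ × ℤ → ℂ be square-summable functions satisfying: (i) λ(-ℓ, b) = 0 and μ(-ℓ, b) = 0 for all b ∈ ℤ; (ii) λ(x,y) = λ(-2ℓ-x, y) and μ(x,y) = μ(-2ℓ-x, y) for all x, y ∈ ℤ; (iii) λ(x,y) + μ(x,-y) = 0 for all x ∈ ℤ and all y ≠ 0, and λ(x,0) + μ(x,0) = 0 for all x ∉ {0, -2ℓ}; (iv) for all s, a, b, y ∈ ℤ with s ≠ 0, b ≠ 0, a ≠ -ℓ, y ≠ 0 and (a+ℓ)·y ≠ s: if b·((a+ℓ)y - s) ≠ 2(a+ℓ), then λ(s - ℓ - (a+ℓ)y, y)·λ(a,b) = 0, and if b·((a+ℓ)y - s) ≠ -2(a+ℓ), then λ(s - ℓ - (a+ℓ)y, -y)·λ(a,b) = 0; (v) for all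 a ∈ ℤ with a ∉ {0, -ℓ, -2ℓ}: for every integer t ≠ 0, (λ(t(a+ℓ) - ℓ, 0) - μ(t(a+ℓ) - ℓ, 0))·λ(a,0) = (λ(ℓ(t-1), 0) - μ(ℓ(t-1), 0))·λ(a,0), and for every integer s ≠ 0 not divisible by a+ℓ, (λ(s-ℓ, 0) - μ(s-ℓ, 0))·λ(a,0) = 0. Then λ(x,y) = 0 and μ(x,y) = 0 for every pair (x,y) ∈ ℤ × ℤ other than (0,0) and (-2ℓ, 0). -/
/-- Solution of the coefficient system for `c_{ℓe₁}` in the induction step of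
the `SL₂(ℤ)` case: the only possibly nonzero coefficients are at `(0,0)` and
`(-2ℓ,0)`. -/
theorem stmt_3 (l : ℤ) (hl : 1 ≤ l) (lam mu : ℤ × ℤ → ℂ)
    (hsuml : Summable fun p : ℤ × ℤ => ‖lam p‖ ^ 2)
    (hsumm : Summable fun p : ℤ × ℤ => ‖mu p‖ ^ 2)
    (h1l : ∀ b : ℤ, lam (-l, b) = 0)
    (h1m : ∀ b : ℤ, mu (-l, b) = 0)
    (h2l : ∀ x y : ℤ, lam (x, y) = lam (-2 * l - x, y))
    (h2m : ∀ x y : ℤ, mu (x, y) = mu (-2 * l - x, y))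
    (h3 : ∀ x y : ℤ, y ≠ 0 → lam (x, y) + mu (x, -y) = 0)
    (h3' : ∀ x : ℤ, x ≠ 0 → x ≠ -2 * l → lam (x, 0) + mu (x, 0) = 0)
    (h4 : ∀ s a b y : ℤ, s ≠ 0 → b ≠ 0 → a ≠ -l → y ≠ 0 → (a + l) * y ≠ s →
      b * ((a + l) * y - s) ≠ 2 * (a + l) →
      lam (s - l - (a + l) * y, y) * lam (a, b) = 0)
    (h4' : ∀ s a b y : ℤ, s ≠ 0 → b ≠ 0 → a ≠ -l → y ≠ 0 → (a + l) * y ≠ s →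
      b * ((a + l) * y - s) ≠ -2 * (a + l) →
      lam (s - l - (a + l) * y, -y) * lam (a, b) = 0)
    (h5 : ∀ a : ℤ, a ≠ 0 → a ≠ -l → a ≠ -2 * l → ∀ t : ℤ, t ≠ 0 →
      (lam (t * (a + l) - l, 0) - mu (t * (a + l) - l, 0)) * lam (a, 0)
        = (lam (l * (t - 1), 0) - mu (l * (t - 1), 0)) * lam (a, 0))
    (h5' : ∀ a : ℤ, a ≠ 0 → a ≠ -l → a ≠ -2 * l → ∀ s : ℤ, s ≠ 0 →
      ¬(a + l) ∣ s →
      (lam (s - l, 0) - mu (s - l, 0)) * lam (a, 0) = 0) :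
    ∀ x y : ℤ, (x, y) ≠ ((0 : ℤ), (0 : ℤ)) → (x, y) ≠ (-2 * l, (0 : ℤ)) →
      lam (x, y) = 0 ∧ mu (x, y) = 0 := by
  -- `lam` vanishes at every point with nonzero second coordinate
  have hA : ∀ a b : ℤ, b ≠ 0 → lam (a, b) = 0 := by
    intro a b hb
    by_cases hal : a = -l
    · subst hal; exact h1l b
    have hd : a + l ≠ 0 := fun h => hal (by omega)
    by_cases hb12 : b = 1 ∨ b = 2
    · have key := h4 ((a + l) * (b + 1)) a b b
        (mul_ne_zero hd (by omega)) hb hal hb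
        (by intro h; exact hd (by linear_combination -h))
        (by
          intro h
          have h2 : (b + 2) * (a + l) = 0 := by linear_combination -h
          rcases mul_eq_zero.mp h2 with h3 | h3
          · omega
          · exact hd h3)
      have e : (a + l) * (b + 1) - l - (a + l) * b = a := by ring
      rw [e] at key
      exact mul_self_eq_zero.mp key
    · push_neg at hb12
      obtain ⟨hb1, hb2⟩ := hb12
      have key := h4' ((a + l) * (1 - b)) a b (-b)
        (mul_ne_zero hd (by omega)) hb hal (neg_ne_zero.mpr hb)
        (by intro h; exact hd (by linear_combination -h))
        (by
          intro h
          have h2 : (2 - b) * (a + l) = 0 := by linear_combination h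
          rcases mul_eq_zero.mp h2 with h3 | h3
          · omega
          · exact hd h3)
      have e : (a + l) * (1 - b) - l - (a + l) * (-b) = a := by ring
      rw [e, neg_neg] at key
      exact mul_self_eq_zero.mp key
  have hl0 : l ≠ 0 := by omega
  -- `lam` vanishes on the axis away from the two special points
  have hB : ∀ x : ℤ, x ≠ 0 → x ≠ -2 * l → lam (x, 0) = 0 := by
    intro a ha0 ha2
    by_cases hal : a = -l
    · subst hal; exact h1l 0
    by_contra hla
    have hd : a + l ≠ 0 := fun h => hal (by omega)
    set g : ℤ → ℂ := fun x => lam (x, 0) - mu (x, 0) with hg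
    have H5' : ∀ s : ℤ, s ≠ 0 → ¬(a + l) ∣ s → g (s - l) = 0 := by
      intro s hs hdv
      exact (mul_eq_zero.mp (h5' a ha0 hal ha2 s hs hdv)).resolve_right hla
    have H5 : ∀ t : ℤ, t ≠ 0 → g (t * (a + l) - l) = g (l * (t - 1)) := by
      intro t ht
      exact mul_right_cancel₀ hla (h5 a ha0 hal ha2 t ht)
    have hgdouble : ∀ x : ℤ, x ≠ 0 → x ≠ -2 * l → g x = 2 * lam (x, 0) := by
      intro x hx0 hx2
      have h := h3' x hx0 hx2
      simp only [hg]
      linear_combination -h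
    have hg0 : g 0 = g a := by
      have h1 := H5 1 one_ne_zero
      have e1 : (1 : ℤ) * (a + l) - l = a := by ring
      have e2 : l * ((1 : ℤ) - 1) = 0 := by ring
      rw [e1, e2] at h1
      exact h1.symm
    have hg0ne : g 0 ≠ 0 := by
      rw [hg0, hgdouble a ha0 ha2]
      exact mul_ne_zero two_ne_zero hla
    by_cases hdl : (a + l) ∣ l
    · obtain ⟨k, hk⟩ := hdl
      have hk0 : k ≠ 0 := by rintro rfl; simp at hk; omega
      have hk1 : k ≠ 1 := by rintro rfl; apply ha0; omega
      have hkm1 : k ≠ -1 := by rintro rfl; apply ha2; omega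
      have hk2 : 2 ≤ k.natAbs := by omega
      have step : ∀ t : ℤ, t ≠ 0 → g (l * (t - 1)) = g (l * (k * t - 1)) := by
        intro t ht
        have h := H5 (k * t) (mul_ne_zero hk0 ht)
        have e : k * t * (a + l) - l = l * (t - 1) := by linear_combination (-t) * hk
        rw [e] at h
        exact h
      have iter : ∀ n : ℕ, g (l * (k ^ n - 1)) = g 0 := by
        intro n
        induction n with
        | zero => norm_num
        | succ n ih =>
          have h := step (k ^ n) (pow_ne_zero n hk0)
          have e : l * (k ^ (n + 1) - 1) = l * (k * k ^ n - 1) := by rw [pow_succ]; ring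
          rw [e, ← h]
          exact ih
      have hKabs : ∀ n : ℕ, 2 ≤ (k ^ (n + 1)).natAbs := by
        intro n
        rw [Int.natAbs_pow]
        calc 2 ≤ 2 ^ (n + 1) := Nat.le_self_pow (Nat.succ_ne_zero n) 2
        _ ≤ k.natAbs ^ (n + 1) := Nat.pow_le_pow_left hk2 (n + 1)
      have hval : ∀ n : ℕ, lam (l * (k ^ (n + 1) - 1), 0) = g 0 / 2 := by
        intro n
        have hK := hKabs n
        set K := k ^ (n + 1) with hKdef
        have hx0 : l * (K - 1) ≠ 0 := mul_ne_zero hl0 (by omega)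
        have hx2 : l * (K - 1) ≠ -2 * l := by
          intro h
          have h2 : l * (K + 1) = 0 := by linear_combination h
          rcases mul_eq_zero.mp h2 with h3 | h3
          · exact hl0 h3
          · omega
        have hi := iter (n + 1)
        rw [hgdouble _ hx0 hx2] at hi
        field_simp
        linear_combination hi
      -- contradiction with square-summability
      have hcpos : (0 : ℝ) < ‖g 0 / 2‖ ^ 2 :=
        pow_pos (norm_pos_iff.mpr (by
          intro h
          exact hg0ne (by field_simp at h; simpa using h))) 2
      have htend := hsuml.tendsto_cofinite_zero
      have hev : ∀ᶠ p : ℤ × ℤ in Filter.cofinite, ‖lam p‖ ^ 2 < ‖g 0 / 2‖ ^ 2 :=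
        htend.eventually_lt_const hcpos
      rw [Filter.eventually_cofinite] at hev
      have hinj : Function.Injective (fun n : ℕ => ((l * (k ^ (n + 1) - 1), 0) : ℤ × ℤ)) := by
        intro m n h
        simp only [Prod.mk.injEq] at h
        have h1 := mul_left_cancel₀ hl0 h.1
        have h2 : k ^ (m + 1) = k ^ (n + 1) := by omega
        have h3 : k.natAbs ^ (m + 1) = k.natAbs ^ (n + 1) := by
          rw [← Int.natAbs_pow, ← Int.natAbs_pow, h2]
        have := Nat.pow_right_injective hk2 h3
        omega
      have hmem : ∀ n : ℕ, ((l * (k ^ (n + 1) - 1), 0) : ℤ × ℤ) ∈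
          {p : ℤ × ℤ | ¬ ‖lam p‖ ^ 2 < ‖g 0 / 2‖ ^ 2} := by
        intro n
        simp only [Set.mem_setOf_eq, not_lt]
        rw [hval n]
      exact (Set.infinite_of_injective_forall_mem hinj hmem) hev
    · have h0 := H5' l hl0 hdl
      rw [sub_self] at h0
      exact hg0ne h0
  -- assemble
  intro x y hne1 hne2
  by_cases hy : y = 0
  · subst hy
    have hx0 : x ≠ 0 := fun h => hne1 (by rw [h])
    have hx2 : x ≠ -2 * l := fun h => hne2 (by rw [h])
    refine ⟨hB x hx0 hx2, ?_⟩
    have h := h3' x hx0 hx2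
    rw [hB x hx0 hx2] at h
    linear_combination h
  · refine ⟨hA x y hy, ?_⟩
    have h := h3 x (-y) (neg_ne_zero.mpr hy)
    rw [hA x (-y) (neg_ne_zero.mpr hy), neg_neg] at h
    linear_combination h
end

section
/- Let λ : ℚ × ℚ → ℂ be a function such that for all s, a, b, y ∈ ℚ with s ≠ 0, b ≠ 0 and a ≠ -1: if y ∉ {0, s/(a+1), s/(a+1) + 2/b}, then λ(s - 1 - (a+1)y, y)·λ(a,b) = 0; and if y ∉ {0, s/(a+1), s/(a+1) - 2/b}, then λ(s - 1 - (a+1)y, -y)·λ(a,b) = 0. Then λ(a,b) = 0 for all a, b ∈ ℚ with a ≠ -1 and b ≠ 0. -/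
/-- Vanishing lemma (Step 4 over ℚ): the coefficient system forces
`λ(a,b) = 0` for all `a ≠ -1` and `b ≠ 0`. -/
theorem stmt_4 (lam : ℚ × ℚ → ℂ)
    (h1 : ∀ s a b y : ℚ, s ≠ 0 → b ≠ 0 → a ≠ -1 →
      y ≠ 0 → y ≠ s / (a + 1) → y ≠ s / (a + 1) + 2 / b →
      lam (s - 1 - (a + 1) * y, y) * lam (a, b) = 0)
    (h2 : ∀ s a b y : ℚ, s ≠ 0 → b ≠ 0 → a ≠ -1 →
      y ≠ 0 → y ≠ s / (a + 1) → y ≠ s / (a + 1) - 2 / b →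
      lam (s - 1 - (a + 1) * y, -y) * lam (a, b) = 0) :
    ∀ a b : ℚ, a ≠ -1 → b ≠ 0 → lam (a, b) = 0 := by
  intro a b ha hb
  have ha1 : a + 1 ≠ 0 := by
    intro h; apply ha; linarith
  by_cases hbm : b = -1 ∨ b = -2
  · -- then b ≠ 1 and b ≠ 2, use h2 with s = (a+1)*(1-b), y = -b
    have hb1 : b ≠ 1 := by rcases hbm with h | h <;> norm_num [h]
    have hb2 : b ≠ 2 := by rcases hbm with h | h <;> norm_num [h]
    have hs : (a + 1) * (1 - b) ≠ 0 := by
      apply mul_ne_zero ha1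
      intro h; apply hb1; linarith
    have hy1 : -b ≠ (a + 1) * (1 - b) / (a + 1) := by
      rw [mul_div_cancel_left₀ _ ha1]
      intro h; apply hb1; linarith [h]
    have hy2 : -b ≠ (a + 1) * (1 - b) / (a + 1) - 2 / b := by
      rw [mul_div_cancel_left₀ _ ha1]
      intro h
      apply hb2
      field_simp at h
      nlinarith [h]
    have key := h2 ((a + 1) * (1 - b)) a b (-b) hs hb ha (neg_ne_zero.mpr hb) hy1 hy2
    have he : (a + 1) * (1 - b) - 1 - (a + 1) * -b = a := by ring
    rw [he, neg_neg] at key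
    exact mul_self_eq_zero.mp key
  · push_neg at hbm
    obtain ⟨hb1, hb2⟩ := hbm
    have hs : (a + 1) * (1 + b) ≠ 0 := by
      apply mul_ne_zero ha1
      intro h; apply hb1; linarith
    have hy1 : b ≠ (a + 1) * (1 + b) / (a + 1) := by
      rw [mul_div_cancel_left₀ _ ha1]
      intro h; linarith [h]
    have hy2 : b ≠ (a + 1) * (1 + b) / (a + 1) + 2 / b := by
      rw [mul_div_cancel_left₀ _ ha1]
      intro h
      apply hb2
      field_simp at h
      nlinarith [h]
    have key := h1 ((a + 1) * (1 + b)) a b b hs hb ha hb hy1 hy2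
    have he : (a + 1) * (1 + b) - 1 - (a + 1) * b = a := by ring
    rw [he] at key
    exact mul_self_eq_zero.mp key
end

section
/- Let ℓ ≥ 1 be an integer and let λ : ℤ × ℤ → ℂ be a function such that for all s, a, b, y ∈ ℤ with s ≠ 0, b ≠ 0, a ≠ -ℓ, y ≠ 0 and (a+ℓ)·y ≠ s: if b·((a+ℓ)y - s) ≠ 2(a+ℓ), then λ(s - ℓ - (a+ℓ)y, y)·λ(a,b) = 0; and if b·((a+ℓ)y - s) ≠ -2(a+ℓ), then λ(s - ℓ - (a+ℓ)y, -y)·λ(a,b) = 0. Then λ(a,b) = 0 for all a, b ∈ ℤ with a ≠ -ℓ and b ≠ 0. -/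
/-- Vanishing lemma (integer analogue with parameter ℓ): the coefficient
system forces `λ(a,b) = 0` for all `a ≠ -ℓ` and `b ≠ 0`. -/
theorem stmt_5 (l : ℤ) (hl : 1 ≤ l) (lam : ℤ × ℤ → ℂ)
    (h1 : ∀ s a b y : ℤ, s ≠ 0 → b ≠ 0 → a ≠ -l → y ≠ 0 → (a + l) * y ≠ s →
      b * ((a + l) * y - s) ≠ 2 * (a + l) →
      lam (s - l - (a + l) * y, y) * lam (a, b) = 0)
    (h2 : ∀ s a b y : ℤ, s ≠ 0 → b ≠ 0 → a ≠ -l → y ≠ 0 → (a + l) * y ≠ s →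
      b * ((a + l) * y - s) ≠ -2 * (a + l) →
      lam (s - l - (a + l) * y, -y) * lam (a, b) = 0) :
    ∀ a b : ℤ, a ≠ -l → b ≠ 0 → lam (a, b) = 0 := by
  intro a b ha hb
  have hal : a + l ≠ 0 := fun h => ha (by linarith)
  by_cases hc : b = -1 ∨ b = -2
  · -- use h2 with s = (a+l)*(1-b), y = -b
    have hb1 : b ≠ 1 := by omega
    have hb2 : b ≠ 2 := by omega
    have key := h2 ((a + l) * (1 - b)) a b (-b)
      (mul_ne_zero hal (by omega)) hb ha (by omega)
      (by
        intro h
        have := mul_left_cancel₀ hal h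
        omega)
      (by
        intro h
        have h' : (2 - b) * (a + l) = 0 := by linear_combination h
        rcases mul_eq_zero.mp h' with h'' | h''
        · omega
        · exact hal h'')
    have harg : (a + l) * (1 - b) - l - (a + l) * (-b) = a := by ring
    rw [harg, neg_neg] at key
    exact mul_self_eq_zero.mp key
  · push_neg at hc
    have hb1 : b ≠ -1 := hc.1
    have hb2 : b ≠ -2 := hc.2
    have key := h1 ((a + l) * (b + 1)) a b b
      (mul_ne_zero hal (by omega)) hb ha hb
      (by
        intro h
        have := mul_left_cancel₀ hal h
        omega)
      (by
        intro h
        have h' : (b + 2) * (a + l) = 0 := by linear_combination -h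
        rcases mul_eq_zero.mp h' with h'' | h''
        · omega
        · exact hal h'')
    have harg : (a + l) * (b + 1) - l - (a + l) * b = a := by ring
    rw [harg] at key
    exact mul_self_eq_zero.mp key
end

section
/- Let λ, μ : ℚ → ℂ be square-summable functions with λ(x) + μ(x) = 0 for all x ∈ ℚ with x ∉ {0, -2}. Suppose that for every s ∈ ℚ with s ≠ 0 and every a ∈ ℚ with a ∉ {-2, -1, 0} one has (λ(s-1) - μ(s-1))·λ(a) = (λ(s(a+1)-1) - μ(s(a+1)-1))·λ(a). Then λ(a) = 0 for every a ∈ ℚ with a ∉ {-2, -1, 0}. -/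
lemma aux_tendsto_zero {f : ℚ → ℂ} (hs : Summable fun x : ℚ => ‖f x‖ ^ 2)
    {x : ℕ → ℚ} (hx : Function.Injective x) :
    Filter.Tendsto (fun n => f (x n)) Filter.atTop (nhds 0) := by
  have h1 : Filter.Tendsto (fun n => ‖f (x n)‖ ^ 2) Filter.atTop (nhds 0) :=
    (hs.comp_injective hx).tendsto_atTop_zero
  have h3 : Filter.Tendsto (fun n => ‖f (x n)‖) Filter.atTop (nhds 0) := by
    have h2 := (Real.continuous_sqrt.tendsto 0).comp h1
    rw [Real.sqrt_zero] at h2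
    have he : (Real.sqrt ∘ fun n => ‖f (x n)‖ ^ 2) = fun n => ‖f (x n)‖ :=
      funext fun n => Real.sqrt_sq (norm_nonneg _)
    rwa [he] at h2
  exact tendsto_zero_iff_norm_tendsto_zero.2 h3

/-- The `b = 0` part of Step 4 over ℚ: `λ(a) = 0` for `a ∉ {-2, -1, 0}`. -/
theorem stmt_6 (lam mu : ℚ → ℂ)
    (hsuml : Summable fun x : ℚ => ‖lam x‖ ^ 2)
    (hsumm : Summable fun x : ℚ => ‖mu x‖ ^ 2)
    (hsum0 : ∀ x : ℚ, x ≠ 0 → x ≠ -2 → lam x + mu x = 0)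
    (heq : ∀ s a : ℚ, s ≠ 0 → a ≠ -2 → a ≠ -1 → a ≠ 0 →
      (lam (s - 1) - mu (s - 1)) * lam a
        = (lam (s * (a + 1) - 1) - mu (s * (a + 1) - 1)) * lam a) :
    ∀ a : ℚ, a ≠ -2 → a ≠ -1 → a ≠ 0 → lam a = 0 := by
  intro a ha2 ha1 ha0
  by_contra hla
  set q : ℚ := a + 1 with hq
  have hq0 : q ≠ 0 := by simp [hq]; intro h; exact ha1 (by linarith)
  have hq1 : q ≠ 1 := by simp [hq]; intro h; exact ha0 (by linarith)
  have hqm1 : q ≠ -1 := by simp [hq]; intro h; exact ha2 (by linarith)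
  -- the constancy relation
  have key : ∀ s : ℚ, s ≠ 0 →
      lam (s - 1) - mu (s - 1) = lam (s * q - 1) - mu (s * q - 1) := by
    intro s hs
    exact mul_right_cancel₀ hla (heq s a hs ha2 ha1 ha0)
  -- iterate
  have iter : ∀ n : ℕ, lam (q * q ^ n - 1) - mu (q * q ^ n - 1) = lam a - mu a := by
    intro n
    induction n with
    | zero => simp [hq]
    | succ n ih =>
        have hne : q * q ^ n ≠ 0 := mul_ne_zero hq0 (pow_ne_zero _ hq0)
        rw [show q * q ^ (n + 1) = (q * q ^ n) * q by ring, ← key (q * q ^ n) hne]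
        exact ih
  -- the sequence is injective
  set x : ℕ → ℚ := fun n => q * q ^ n - 1 with hx
  have hxinj : Function.Injective x := by
    intro m n h
    have h' : q ^ (m + 1) = q ^ (n + 1) := by
      have : q * q ^ m = q * q ^ n := by
        have := h; simp only [hx] at this; linarith
      simpa [pow_succ, mul_comm] using this
    have habs : |q| ^ (m + 1) = |q| ^ (n + 1) := by
      rw [← abs_pow, ← abs_pow, h']
    have hq0' : (0 : ℚ) < |q| := abs_pos.2 hq0
    have hq1' : |q| ≠ 1 := by
      intro h1
      rcases abs_eq (le_of_lt one_pos) |>.1 h1 with h | h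
      · exact hq1 h
      · exact hqm1 h
    have := pow_right_injective₀ hq0' hq1' habs
    omega
  -- limits
  have hl : Filter.Tendsto (fun n => lam (x n)) Filter.atTop (nhds 0) :=
    aux_tendsto_zero hsuml hxinj
  have hm : Filter.Tendsto (fun n => mu (x n)) Filter.atTop (nhds 0) :=
    aux_tendsto_zero hsumm hxinj
  have hdiff : Filter.Tendsto (fun n => lam (x n) - mu (x n)) Filter.atTop (nhds 0) := by
    simpa using hl.sub hm
  have hconst : (fun n : ℕ => lam (x n) - mu (x n)) = fun _ => lam a - mu a := by
    funext n; exact iter n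
  rw [hconst] at hdiff
  have h0 : lam a - mu a = 0 := (tendsto_nhds_unique tendsto_const_nhds hdiff)
  have h1 : lam a + mu a = 0 := hsum0 a ha0 ha2
  apply hla
  have : (2 : ℂ) * lam a = 0 := by linear_combination h0 + h1
  simpa using this
end

section
/- Let ℓ ≥ 1 be an integer and let λ, μ : ℤ → ℂ be square-summable functions with λ(x) + μ(x) = 0 for all x ∈ ℤ with x ∉ {0, -2ℓ}. Suppose that for every a ∈ ℤ with a ∉ {0, -ℓ, -2ℓ}: (a) for every integer t ≠ 0, (λ(t(a+ℓ) - ℓ) - μ(t(a+ℓ) - ℓ))·λ(a) = (λ(ℓ(t-1)) - μ(ℓ(t-1)))·λ(a); and (b) for every integer s ≠ 0 not divisible by a+ℓ, (λ(s-ℓ) - μ(s-ℓ))·λ(a) = 0. Then λ(a) = 0 for every a ∈ ℤ with a ∉ {0, -ℓ, -2ℓ}. -/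
/-- Step 4 of the appendix (the `b = 0` part of the induction step for
`SL₂(ℤ)`): `λ(a) = 0` for `a ∉ {0, -ℓ, -2ℓ}`. -/
theorem stmt_7 (l : ℤ) (hl : 1 ≤ l) (lam mu : ℤ → ℂ)
    (hsuml : Summable fun x : ℤ => ‖lam x‖ ^ 2)
    (hsumm : Summable fun x : ℤ => ‖mu x‖ ^ 2)
    (hsum0 : ∀ x : ℤ, x ≠ 0 → x ≠ -2 * l → lam x + mu x = 0)
    (ha : ∀ a : ℤ, a ≠ 0 → a ≠ -l → a ≠ -2 * l → ∀ t : ℤ, t ≠ 0 →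
      (lam (t * (a + l) - l) - mu (t * (a + l) - l)) * lam a
        = (lam (l * (t - 1)) - mu (l * (t - 1))) * lam a)
    (hb : ∀ a : ℤ, a ≠ 0 → a ≠ -l → a ≠ -2 * l → ∀ s : ℤ, s ≠ 0 →
      ¬(a + l) ∣ s → (lam (s - l) - mu (s - l)) * lam a = 0) :
    ∀ a : ℤ, a ≠ 0 → a ≠ -l → a ≠ -2 * l → lam a = 0 := by
  intro a ha1 ha2 ha3
  by_contra h0
  have hla : lam a + mu a = 0 := hsum0 a ha1 ha3
  have hma : mu a = -lam a := by linear_combination hla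
  by_cases hdvd : (a + l) ∣ l
  · obtain ⟨d, hd⟩ := hdvd
    have hc : a + l ≠ 0 := by intro h; exact ha2 (by linarith)
    have hd0 : d ≠ 0 := by rintro rfl; simp at hd; omega
    have hd1 : d ≠ 1 := by rintro rfl; simp at hd; exact ha1 (by linarith)
    have hdm1 : d ≠ -1 := by rintro rfl; exact ha3 (by linarith)
    have hd2 : 2 ≤ d.natAbs := by omega
    have key : ∀ m : ℤ, m ≠ -d →
        (lam (m * (a + l)) - mu (m * (a + l))) * lam a
          = (lam ((d * m + d ^ 2 - d) * (a + l))
              - mu ((d * m + d ^ 2 - d) * (a + l))) * lam a := by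
      intro m hm
      have ht : m + d ≠ 0 := by intro h; exact hm (by linarith)
      have e1 : (m + d) * (a + l) - l = m * (a + l) := by linear_combination -hd
      have e2 : l * ((m + d) - 1) = (d * m + d ^ 2 - d) * (a + l) := by
        linear_combination (m + d - 1) * hd
      have h := ha a ha1 ha2 ha3 (m + d) ht
      rw [e1, e2] at h
      exact h
    have main : ∀ k : ℕ,
        (lam ((d ^ k - d) * (a + l)) - mu ((d ^ k - d) * (a + l))) * lam a
          = (lam a - mu a) * lam a := by
      intro k
      induction k with
      | zero =>
        have e : ((d : ℤ) ^ 0 - d) * (a + l) = a := by linear_combination hd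
        rw [e]
      | succ n ih =>
        have hm : (d : ℤ) ^ n - d ≠ -d := by
          intro h
          have hpn : (d : ℤ) ^ n ≠ 0 := pow_ne_zero n hd0
          have : (d : ℤ) ^ n = 0 := by linarith
          exact hpn this
        have h := key (d ^ n - d) hm
        have e : ((d : ℤ) * (d ^ n - d) + d ^ 2 - d) * (a + l)
            = (d ^ (n + 1) - d) * (a + l) := by ring
        rw [e] at h
        exact h.symm.trans ih
    have hd2' : 1 < d.natAbs := hd2
    have hpow : ∀ k : ℕ, d.natAbs < d.natAbs ^ (k + 2) := by
      intro k
      calc d.natAbs = d.natAbs ^ 1 := (pow_one _).symm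
        _ < d.natAbs ^ (k + 2) := Nat.pow_lt_pow_right hd2' (by omega)
    have hne1 : ∀ k : ℕ, (d : ℤ) ^ (k + 2) ≠ d := by
      intro k h
      have hn := congrArg Int.natAbs h
      rw [Int.natAbs_pow] at hn
      have h2 := hpow k
      omega
    have hne2 : ∀ k : ℕ, (d : ℤ) ^ (k + 2) ≠ -d := by
      intro k h
      have hn := congrArg Int.natAbs h
      rw [Int.natAbs_pow, Int.natAbs_neg] at hn
      have h2 := hpow k
      omega
    have hval : ∀ k : ℕ, lam ((d ^ (k + 2) - d) * (a + l)) = lam a := by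
      intro k
      have hx0 : (d ^ (k + 2) - d) * (a + l) ≠ 0 :=
        mul_ne_zero (sub_ne_zero.mpr (hne1 k)) hc
      have hx2 : (d ^ (k + 2) - d) * (a + l) ≠ -2 * l := by
        intro h
        have h' : ((d : ℤ) ^ (k + 2) - d) * (a + l) = (-2 * d) * (a + l) := by
          linear_combination h - 2 * hd
        have h'' := mul_right_cancel₀ hc h'
        exact hne2 k (by linarith)
      have hm := main (k + 2)
      have hmx : mu ((d ^ (k + 2) - d) * (a + l))
          = -lam ((d ^ (k + 2) - d) * (a + l)) := by
        linear_combination hsum0 _ hx0 hx2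
      rw [hmx, hma] at hm
      have h3 := mul_right_cancel₀ h0 hm
      linear_combination h3 / 2
    have hfin : {x : ℤ | ¬ ‖lam x‖ ^ 2 < ‖lam a‖ ^ 2}.Finite := by
      have hε : (0 : ℝ) < ‖lam a‖ ^ 2 := by
        have : 0 < ‖lam a‖ := norm_pos_iff.mpr h0
        positivity
      have h1 := hsuml.tendsto_cofinite_zero
      have h2 := h1.eventually (gt_mem_nhds hε)
      rwa [Filter.eventually_cofinite] at h2
    have hinj : Function.Injective (fun k : ℕ => ((d : ℤ) ^ (k + 2) - d) * (a + l)) := by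
      intro j k h
      simp only at h
      have h' := mul_right_cancel₀ hc h
      have hp : (d : ℤ) ^ (j + 2) = d ^ (k + 2) := by linarith
      have hn := congrArg Int.natAbs hp
      rw [Int.natAbs_pow, Int.natAbs_pow] at hn
      have := Nat.pow_right_injective hd2 hn
      omega
    have hsub : Set.range (fun k : ℕ => ((d : ℤ) ^ (k + 2) - d) * (a + l))
        ⊆ {x : ℤ | ¬ ‖lam x‖ ^ 2 < ‖lam a‖ ^ 2} := by
      rintro x ⟨k, rfl⟩
      simp only [Set.mem_setOf_eq, not_lt]
      rw [hval k]
    exact Set.infinite_range_of_injective hinj (hfin.subset hsub)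
  · have h1 := hb a ha1 ha2 ha3 l (by omega) hdvd
    rw [sub_self] at h1
    have h2 := ha a ha1 ha2 ha3 1 one_ne_zero
    have e1 : 1 * (a + l) - l = a := by ring
    have e2 : l * (1 - 1) = 0 := by ring
    rw [e1, e2, h1, hma] at h2
    have h4 : lam a * lam a = 0 := by linear_combination h2 / 2
    exact h0 (mul_self_eq_zero.mp h4)
end

section
/- For t ∈ ℚ let r_t denote the matrix with rows (1, t) and (0, 1) in SL₂(ℚ). Let g ∈ SL₂(ℚ) be such that g ≠ r_t and g ≠ -r_t for every t ∈ ℚ, and let x ∈ ℚ with x ≠ 0. Then for all integers n ≠ m one has r_{nx}·g·r_{nx}⁻¹ ≠ r_{mx}·g·r_{mx}⁻¹ and r_{nx}·g·r_{nx}⁻¹ ≠ -(r_{mx}·g·r_{mx}⁻¹). -/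
open Matrix

/-- The upper unitriangular matrix `r t = !![1, t; 0, 1]` in `SL₂(ℚ)`. -/
def rMat (t : ℚ) : Matrix.SpecialLinearGroup (Fin 2) ℚ :=
  ⟨!![1, t; 0, 1], by simp [Matrix.det_fin_two_of]⟩

lemma rMat_inv (t : ℚ) : (rMat t)⁻¹ = rMat (-t) := by
  apply inv_eq_of_mul_eq_one_right
  apply Subtype.ext
  show (!![1, t; 0, 1] : Matrix (Fin 2) (Fin 2) ℚ) * !![1, -t; 0, 1] = _
  rw [Matrix.mul_fin_two]
  norm_num
  rw [← Matrix.one_fin_two]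

/-- For `g ∈ SL₂(ℚ)` which is not `± r_t` for any `t`, and `x ≠ 0`, the
conjugates `r_{nx} g r_{nx}⁻¹` are pairwise distinct, even up to sign. -/
theorem stmt_10 (g : Matrix.SpecialLinearGroup (Fin 2) ℚ)
    (hg : ∀ t : ℚ, g ≠ rMat t ∧ g ≠ -rMat t)
    (x : ℚ) (hx : x ≠ 0) (n m : ℤ) (hnm : n ≠ m) :
    rMat (n * x) * g * (rMat (n * x))⁻¹ ≠ rMat (m * x) * g * (rMat (m * x))⁻¹ ∧
    rMat (n * x) * g * (rMat (n * x))⁻¹ ≠ -(rMat (m * x) * g * (rMat (m * x))⁻¹) := by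
  obtain ⟨a, b, c, d, hmat⟩ : ∃ a b c d, (g : Matrix (Fin 2) (Fin 2) ℚ) = !![a, b; c, d] :=
    ⟨_, _, _, _, Matrix.eta_fin_two _⟩
  have hdet : a * d - b * c = 1 := by
    have h2 := g.2
    rw [hmat, Matrix.det_fin_two_of] at h2
    exact h2
  have key : ∀ t : ℚ, ((rMat t * g * (rMat t)⁻¹ : Matrix.SpecialLinearGroup (Fin 2) ℚ) :
      Matrix (Fin 2) (Fin 2) ℚ) = !![a + t * c, b + t * d - t * a - t ^ 2 * c; c, d - t * c] := by
    intro t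
    rw [rMat_inv]
    simp only [Matrix.SpecialLinearGroup.coe_mul, hmat]
    show !![1, t; 0, 1] * !![a, b; c, d] * !![1, -t; 0, 1] = _
    rw [Matrix.mul_fin_two, Matrix.mul_fin_two]
    ext i j
    fin_cases i <;> fin_cases j <;> simp <;> ring
  set nx : ℚ := (n : ℚ) * x with hnx
  set mx : ℚ := (m : ℚ) * x with hmx
  have hne : nx - mx ≠ 0 := by
    rw [hnx, hmx]
    intro h
    apply hnm
    have : ((n : ℚ) - m) * x = 0 := by ring_nf; linarith
    rcases mul_eq_zero.mp this with h' | h'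
    · exact_mod_cast sub_eq_zero.mp h'
    · exact absurd h' hx
  constructor
  · intro h
    have hM := Subtype.ext_iff.mp h
    rw [key nx, key mx] at hM
    have h00 := congrFun (congrFun hM 0) 0
    have h01 := congrFun (congrFun hM 0) 1
    simp at h00 h01
    have hc : c = 0 := h00.resolve_left fun h' => hne (sub_eq_zero.mpr h')
    have hda : d = a := by
      rw [hc] at h01
      have : (nx - mx) * (d - a) = 0 := by ring_nf; ring_nf at h01; linarith
      have := (mul_eq_zero.mp this).resolve_left hne
      linarith [sub_eq_zero.mp this]
    have ha : a = 1 ∨ a = -1 := by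
      apply mul_self_eq_one_iff.mp
      rw [hc, hda] at hdet; linarith
    rcases ha with ha | ha
    · apply (hg b).1
      apply Subtype.ext
      rw [hmat, hc, hda, ha]
      rfl
    · apply (hg (-b)).2
      apply Subtype.ext
      rw [hmat, hc, hda, ha]
      show _ = -(!![1, -b; 0, 1] : Matrix (Fin 2) (Fin 2) ℚ)
      ext i j
      fin_cases i <;> fin_cases j <;> simp
  · intro h
    have hM := Subtype.ext_iff.mp h
    have hneg : ((-(rMat mx * g * (rMat mx)⁻¹) : Matrix.SpecialLinearGroup (Fin 2) ℚ) :
        Matrix (Fin 2) (Fin 2) ℚ) = -((rMat mx * g * (rMat mx)⁻¹ : Matrix.SpecialLinearGroup (Fin 2) ℚ) :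
        Matrix (Fin 2) (Fin 2) ℚ) := rfl
    rw [key nx, hneg, key mx] at hM
    have h10 := congrFun (congrFun hM 1) 0
    have h11 := congrFun (congrFun hM 1) 1
    simp at h10 h11
    have hc : c = 0 := by linarith
    rw [hc] at h11 hdet
    have hd : d = 0 := by linarith
    rw [hd] at hdet
    linarith
end
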